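/- Let f : [a,b] → (0,∞) be a continuous geometrically convex function, where 0 < a < b. Then f(√(ab)) ≤ √(f(a^(3/4) b^(1/4)) · f(a^(1/4) b^(3/4))) ≤ exp( (1/(log b − log a)) ∫_a^b (log f(t))/t dt ) ≤ √(f(√(ab))) · f(a)^(1/4) · f(b)^(1/4) ≤ √(f(a) · f(b)). -/

import Mathlib

open Set Real intervalIntegral

/-- Hermite–Hadamard, left inequality. -/
lemma hh_left {g : ℝ → ℝ} {p q : ℝ} (hpq : p < q)
    (hc : ConvexOn ℝ (Set.Icc p q) g) (hcont : ContinuousOn g (Set.Icc p q)) :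
    (q - p) * g ((p + q) / 2) ≤ ∫ s in p..q, g s := by
  have huIcc : uIcc p q = Icc p q := uIcc_of_le hpq.le
  have hInt : IntervalIntegrable g MeasureTheory.volume p q :=
    (hcont.mono (by rw [huIcc])).intervalIntegrable
  have hcont' : ContinuousOn (fun s => g (p + q - s)) (Icc p q) := by
    apply hcont.comp (by fun_prop)
    intro s hs
    exact ⟨by linarith [hs.2], by linarith [hs.1]⟩
  have hInt' : IntervalIntegrable (fun s => g (p + q - s)) MeasureTheory.volume p q :=
    (hcont'.mono (by rw [huIcc])).intervalIntegrable
  have hrefl : (∫ s in p..q, g (p + q - s)) = ∫ s in p..q, g s := by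
    have := intervalIntegral.integral_comp_sub_left (a := p) (b := q) g (p + q)
    simpa using this
  have hpt : ∀ s ∈ Icc p q, g ((p + q) / 2) ≤ (g s + g (p + q - s)) / 2 := by
    intro s hs
    have hs' : p + q - s ∈ Icc p q := ⟨by linarith [hs.2], by linarith [hs.1]⟩
    have := hc.2 hs hs' (by norm_num : (0:ℝ) ≤ (1/2:ℝ)) (by norm_num : (0:ℝ) ≤ (1/2:ℝ))
      (by norm_num)
    simp only [smul_eq_mul] at this
    have heq : (1/2 : ℝ) * s + (1/2 : ℝ) * (p + q - s) = (p + q) / 2 := by ring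
    rw [heq] at this
    linarith
  have hmono : (∫ s in p..q, g ((p + q) / 2)) ≤ ∫ s in p..q, (g s + g (p + q - s)) / 2 := by
    apply intervalIntegral.integral_mono_on hpq.le intervalIntegrable_const
      (by exact (hInt.add hInt').div_const 2) hpt
  rw [intervalIntegral.integral_const, smul_eq_mul] at hmono
  calc (q - p) * g ((p + q) / 2) ≤ ∫ s in p..q, (g s + g (p + q - s)) / 2 := hmono
    _ = ((∫ s in p..q, g s) + ∫ s in p..q, g (p + q - s)) / 2 := by
        rw [← intervalIntegral.integral_add hInt hInt',
          ← intervalIntegral.integral_div (a := p) (b := q)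
            (f := fun s => g s + g (p + q - s)) (r := 2)]
    _ = ∫ s in p..q, g s := by rw [hrefl]; ring

/-- Hermite–Hadamard, right inequality. -/
lemma hh_right {g : ℝ → ℝ} {p q : ℝ} (hpq : p < q)
    (hc : ConvexOn ℝ (Set.Icc p q) g) (hcont : ContinuousOn g (Set.Icc p q)) :
    (∫ s in p..q, g s) ≤ (q - p) * (g p + g q) / 2 := by
  have huIcc : uIcc p q = Icc p q := uIcc_of_le hpq.le
  have hInt : IntervalIntegrable g MeasureTheory.volume p q :=
    (hcont.mono (by rw [huIcc])).intervalIntegrable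
  have hqp : (0:ℝ) < q - p := by linarith
  have hpt : ∀ s ∈ Icc p q, g s ≤ ((q - s) * g p + (s - p) * g q) / (q - p) := by
    intro s hs
    have hl : (0:ℝ) ≤ (q - s) / (q - p) := by
      apply div_nonneg (by linarith [hs.2]) hqp.le
    have hr : (0:ℝ) ≤ (s - p) / (q - p) := by
      apply div_nonneg (by linarith [hs.1]) hqp.le
    have hsum : (q - s) / (q - p) + (s - p) / (q - p) = 1 := by
      field_simp
      ring
    have := hc.2 (left_mem_Icc.2 hpq.le) (right_mem_Icc.2 hpq.le) hl hr hsum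
    simp only [smul_eq_mul] at this
    have heq : (q - s) / (q - p) * p + (s - p) / (q - p) * q = s := by
      field_simp; ring
    rw [heq] at this
    calc g s ≤ (q - s) / (q - p) * g p + (s - p) / (q - p) * g q := this
      _ = ((q - s) * g p + (s - p) * g q) / (q - p) := by ring
  have hIntR : IntervalIntegrable (fun s => ((q - s) * g p + (s - p) * g q) / (q - p))
      MeasureTheory.volume p q := by
    apply Continuous.intervalIntegrable; fun_prop
  have hmono := intervalIntegral.integral_mono_on hpq.le hInt hIntR hpt
  calc (∫ s in p..q, g s) ≤ ∫ s in p..q, ((q - s) * g p + (s - p) * g q) / (q - p) := hmono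
    _ = (q - p) * (g p + g q) / 2 := by
        have h1 : (∫ s in p..q, ((q - s) * g p + (s - p) * g q) / (q - p))
            = ∫ s in p..q, ((q * g p - p * g q) / (q - p) + s * ((g q - g p) / (q - p))) := by
          apply intervalIntegral.integral_congr
          intro s _
          field_simp
          ring
        rw [h1, intervalIntegral.integral_add intervalIntegrable_const
          (by apply Continuous.intervalIntegrable; fun_prop),
          intervalIntegral.integral_const]
        have h2 : (∫ s in p..q, s * ((g q - g p) / (q - p)))
            = (∫ s in p..q, s) * ((g q - g p) / (q - p)) := by
          exact intervalIntegral.integral_mul_const _ _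
        rw [h2, integral_id]
        have hne : q - p ≠ 0 := hqp.ne'
        rw [smul_eq_mul]
        field_simp
        ring

/-- Refined Hermite–Hadamard chain for a continuous geometrically convex function
`f : [a,b] → (0,∞)`, `0 < a < b`. -/
theorem stmt_5 (a b : ℝ) (ha : 0 < a) (hab : a < b) (f : ℝ → ℝ)
    (hfpos : ∀ x ∈ Set.Icc a b, 0 < f x) (hfcont : ContinuousOn f (Set.Icc a b))
    (hgc : ∀ x ∈ Set.Icc a b, ∀ y ∈ Set.Icc a b, ∀ l ∈ Set.Icc (0 : ℝ) 1,
      f (x ^ l * y ^ (1 - l)) ≤ f x ^ l * f y ^ (1 - l)) :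
    f (Real.sqrt (a * b)) ≤
      Real.sqrt (f (a ^ (3 / 4 : ℝ) * b ^ (1 / 4 : ℝ)) *
        f (a ^ (1 / 4 : ℝ) * b ^ (3 / 4 : ℝ))) ∧
    Real.sqrt (f (a ^ (3 / 4 : ℝ) * b ^ (1 / 4 : ℝ)) *
        f (a ^ (1 / 4 : ℝ) * b ^ (3 / 4 : ℝ))) ≤
      Real.exp ((1 / (Real.log b - Real.log a)) * ∫ t in a..b, Real.log (f t) / t) ∧
    Real.exp ((1 / (Real.log b - Real.log a)) * ∫ t in a..b, Real.log (f t) / t) ≤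
      Real.sqrt (f (Real.sqrt (a * b))) * f a ^ (1 / 4 : ℝ) * f b ^ (1 / 4 : ℝ) ∧
    Real.sqrt (f (Real.sqrt (a * b))) * f a ^ (1 / 4 : ℝ) * f b ^ (1 / 4 : ℝ) ≤
      Real.sqrt (f a * f b) := by
  have hb : 0 < b := ha.trans hab
  set A := Real.log a with hA
  set B := Real.log b with hB
  have hAB : A < B := Real.log_lt_log ha hab
  set g : ℝ → ℝ := fun s => Real.log (f (Real.exp s)) with hg
  -- exp maps [A,B] into [a,b]
  have hmem : ∀ s ∈ Icc A B, Real.exp s ∈ Icc a b := by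
    intro s hs
    constructor
    · calc a = Real.exp A := (Real.exp_log ha).symm
        _ ≤ Real.exp s := Real.exp_le_exp.2 hs.1
    · calc Real.exp s ≤ Real.exp B := Real.exp_le_exp.2 hs.2
        _ = b := Real.exp_log hb
  -- g is convex on [A,B]
  have hconv : ConvexOn ℝ (Icc A B) g := by
    refine ⟨convex_Icc _ _, ?_⟩
    intro s hs t ht μ ν hμ hν hsum
    have hν1 : ν = 1 - μ := by linarith
    have hμ1 : μ ∈ Icc (0:ℝ) 1 := ⟨hμ, by linarith⟩
    have hx := hmem s hs
    have hy := hmem t ht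
    have hcomb : μ • s + ν • t ∈ Icc A B := (convex_Icc A B) hs ht hμ hν hsum
    have hxz := hmem _ hcomb
    have hexp : Real.exp (μ * s + ν * t) = Real.exp s ^ μ * Real.exp t ^ ν := by
      rw [Real.rpow_def_of_pos (Real.exp_pos s), Real.rpow_def_of_pos (Real.exp_pos t),
        Real.log_exp, Real.log_exp, ← Real.exp_add]
      simp [smul_eq_mul, mul_comm]
    have key := hgc _ hx _ hy μ hμ1
    rw [← hν1] at key
    have hfx := hfpos _ hx
    have hfy := hfpos _ hy
    have hfz := hfpos _ hxz
    simp only [smul_eq_mul] at hfz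
    rw [hexp] at hfz
    simp only [hg, smul_eq_mul]
    rw [hexp]
    calc Real.log (f (Real.exp s ^ μ * Real.exp t ^ ν))
        ≤ Real.log (f (Real.exp s) ^ μ * f (Real.exp t) ^ ν) := by
          exact Real.log_le_log hfz key
      _ = μ * Real.log (f (Real.exp s)) + ν * Real.log (f (Real.exp t)) := by
          rw [Real.log_mul (Real.rpow_pos_of_pos hfx μ).ne' (Real.rpow_pos_of_pos hfy ν).ne',
            Real.log_rpow hfx, Real.log_rpow hfy]
  -- g is continuous on [A,B]
  have hgcont : ContinuousOn g (Icc A B) := by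
    apply ContinuousOn.log
    · exact hfcont.comp Real.continuous_exp.continuousOn hmem
    · intro s hs; exact (hfpos _ (hmem s hs)).ne'
  -- midpoints
  set m : ℝ := (A + B) / 2 with hm
  set m₁ : ℝ := (A + m) / 2 with hm₁
  set m₂ : ℝ := (m + B) / 2 with hm₂
  have hAm : A < m := by simp only [hm]; linarith
  have hmB : m < B := by simp only [hm]; linarith
  have hmIcc : m ∈ Icc A B := ⟨hAm.le, hmB.le⟩
  have hm₁Icc : m₁ ∈ Icc A B := ⟨by simp only [hm₁]; linarith, by simp only [hm₁]; linarith⟩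
  have hm₂Icc : m₂ ∈ Icc A B := ⟨by simp only [hm₂]; linarith, by simp only [hm₂]; linarith⟩
  -- restrictions of convexity / continuity
  have hsub1 : Icc A m ⊆ Icc A B := Set.Icc_subset_Icc le_rfl hmB.le
  have hsub2 : Icc m B ⊆ Icc A B := Set.Icc_subset_Icc hAm.le le_rfl
  have hconv1 := hconv.subset hsub1 (convex_Icc A m)
  have hconv2 := hconv.subset hsub2 (convex_Icc m B)
  have hgcont1 := hgcont.mono hsub1
  have hgcont2 := hgcont.mono hsub2
  -- HH on the two halves
  have hL1 := hh_left hAm hconv1 hgcont1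
  have hL2 := hh_left hmB hconv2 hgcont2
  have hR1 := hh_right hAm hconv1 hgcont1
  have hR2 := hh_right hmB hconv2 hgcont2
  have hIsplit : (∫ s in A..B, g s) = (∫ s in A..m, g s) + ∫ s in m..B, g s := by
    rw [intervalIntegral.integral_add_adjacent_intervals]
    · exact (hgcont1.mono (by rw [uIcc_of_le hAm.le])).intervalIntegrable
    · exact (hgcont2.mono (by rw [uIcc_of_le hmB.le])).intervalIntegrable
  have hma : m - A = (B - A) / 2 := by simp only [hm]; ring
  have hbm : B - m = (B - A) / 2 := by simp only [hm]; ring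
  -- midpoint convexity facts
  have midpt : ∀ s ∈ Icc A B, ∀ t ∈ Icc A B, g ((s + t) / 2) ≤ (g s + g t) / 2 := by
    intro s hs t ht
    have := hconv.2 hs ht (by norm_num : (0:ℝ) ≤ 1/2) (by norm_num : (0:ℝ) ≤ 1/2) (by norm_num)
    simp only [smul_eq_mul] at this
    have heq : (1/2:ℝ) * s + (1/2:ℝ) * t = (s + t) / 2 := by ring
    rw [heq] at this; linarith
  have hmid12 : g m ≤ (g m₁ + g m₂) / 2 := by
    have := midpt m₁ hm₁Icc m₂ hm₂Icc
    have heq : (m₁ + m₂) / 2 = m := by simp only [hm₁, hm₂]; ring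
    rwa [heq] at this
  have hmidAB : g m ≤ (g A + g B) / 2 := by
    have := midpt A (left_mem_Icc.2 hAB.le) B (right_mem_Icc.2 hAB.le)
    have heq : (A + B) / 2 = m := hm.symm
    rwa [heq] at this
  -- core chain for I := ∫_A^B g
  set I : ℝ := ∫ s in A..B, g s with hI
  have hBA : (0:ℝ) < B - A := by linarith
  have hmids1 : (A + m)/2 = m₁ := hm₁.symm
  have hmids2 : (m + B)/2 = m₂ := hm₂.symm
  rw [hmids1, hma] at hL1
  rw [hmids2, hbm] at hL2
  rw [hma] at hR1
  rw [hbm] at hR2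
  have hchain1 : (g m₁ + g m₂) / 2 ≤ I / (B - A) := by
    rw [le_div_iff₀ hBA]
    have hsum := add_le_add hL1 hL2
    rw [← hIsplit] at hsum
    nlinarith
  have hchain2 : I / (B - A) ≤ g m / 2 + (g A + g B) / 4 := by
    rw [div_le_iff₀ hBA]
    have hsum := add_le_add hR1 hR2
    rw [← hIsplit] at hsum
    nlinarith
  -- translate points
  have hsqrtab : Real.sqrt (a * b) = Real.exp m := by
    rw [Real.sqrt_eq_rpow, Real.rpow_def_of_pos (by positivity), Real.log_mul ha.ne' hb.ne']
    simp only [hm]; ring_nf; rfl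
  have hx₁ : a ^ (3/4 : ℝ) * b ^ (1/4 : ℝ) = Real.exp m₁ := by
    rw [Real.rpow_def_of_pos ha, Real.rpow_def_of_pos hb, ← Real.exp_add]
    congr 1; simp only [hm₁, hm]; ring
  have hx₂ : a ^ (1/4 : ℝ) * b ^ (3/4 : ℝ) = Real.exp m₂ := by
    rw [Real.rpow_def_of_pos ha, Real.rpow_def_of_pos hb, ← Real.exp_add]
    congr 1; simp only [hm₂, hm]; ring
  have hfa : f a = Real.exp (g A) := by
    rw [hg]; simp only [hA, Real.exp_log ha]
    exact (Real.exp_log (hfpos a ⟨le_rfl, hab.le⟩)).symm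
  have hfb : f b = Real.exp (g B) := by
    rw [hg]; simp only [hB, Real.exp_log hb]
    exact (Real.exp_log (hfpos b ⟨hab.le, le_rfl⟩)).symm
  have hfm : f (Real.exp m) = Real.exp (g m) :=
    (Real.exp_log (hfpos _ (hmem m hmIcc))).symm
  have hfm₁ : f (Real.exp m₁) = Real.exp (g m₁) :=
    (Real.exp_log (hfpos _ (hmem m₁ hm₁Icc))).symm
  have hfm₂ : f (Real.exp m₂) = Real.exp (g m₂) :=
    (Real.exp_log (hfpos _ (hmem m₂ hm₂Icc))).symm
  -- integral substitution
  have hIsub : (∫ t in a..b, Real.log (f t) / t) = I := by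
    rw [hI]
    have h1 : (∫ t in a..b, Real.log (f t) / t) = ∫ t in a..b, t⁻¹ • (g ∘ Real.log) t := by
      apply intervalIntegral.integral_congr
      intro t ht
      rw [uIcc_of_le hab.le] at ht
      have ht0 : 0 < t := lt_of_lt_of_le ha ht.1
      simp only [smul_eq_mul, Function.comp, hg, Real.exp_log ht0]
      ring
    have hders : ∀ t ∈ uIcc a b, HasDerivAt Real.log t⁻¹ t := by
      intro t ht
      rw [uIcc_of_le hab.le] at ht
      exact Real.hasDerivAt_log (lt_of_lt_of_le ha ht.1).ne'
    have hcont' : ContinuousOn (fun t : ℝ => t⁻¹) (uIcc a b) := by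
      apply ContinuousOn.inv₀ continuousOn_id
      intro t ht
      rw [uIcc_of_le hab.le] at ht
      exact (lt_of_lt_of_le ha ht.1).ne'
    have himg : ContinuousOn g (Real.log '' uIcc a b) := by
      apply hgcont.mono
      rintro s ⟨t, ht, rfl⟩
      rw [uIcc_of_le hab.le] at ht
      exact ⟨Real.log_le_log ha ht.1, Real.log_le_log (lt_of_lt_of_le ha ht.1) ht.2⟩
    rw [h1, intervalIntegral.integral_comp_smul_deriv' hders hcont' himg]
  have e1 : Real.sqrt (f (Real.exp m₁) * f (Real.exp m₂))
      = Real.exp ((g m₁ + g m₂) / 2) := by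
    rw [hfm₁, hfm₂, ← Real.exp_add, ← Real.exp_half]
  have e2 : Real.sqrt (f (Real.exp m)) * f a ^ (1/4 : ℝ) * f b ^ (1/4 : ℝ)
      = Real.exp (g m / 2 + g A * (1/4) + g B * (1/4)) := by
    rw [hfm, hfa, hfb, ← Real.exp_half,
      Real.rpow_def_of_pos (Real.exp_pos _), Real.rpow_def_of_pos (Real.exp_pos _),
      Real.log_exp, Real.log_exp, ← Real.exp_add, ← Real.exp_add]
  have e3 : Real.sqrt (f a * f b) = Real.exp ((g A + g B) / 2) := by
    rw [hfa, hfb, ← Real.exp_add, ← Real.exp_half]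
  refine ⟨?_, ?_, ?_, ?_⟩
  · rw [hsqrtab, hx₁, hx₂, hfm, e1, Real.exp_le_exp]
    linarith [hmid12]
  · rw [hx₁, hx₂, hIsub, e1, Real.exp_le_exp]
    have heq : 1 / (B - A) * I = I / (B - A) := by ring
    rw [heq]; exact hchain1
  · rw [hIsub, hsqrtab, e2, Real.exp_le_exp]
    have heq : 1 / (B - A) * I = I / (B - A) := by ring
    rw [heq]
    calc I / (B - A) ≤ g m / 2 + (g A + g B) / 4 := hchain2
      _ = g m / 2 + g A * (1/4) + g B * (1/4) := by ring
  · rw [hsqrtab, e2, e3, Real.exp_le_exp]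
    linarith [hmidAB]
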